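/- arXiv:2104.06959 — 2 statements merged into one kernel-verified Lean document; each statement's English description precedes it below -/
import Mathlib

section
/- For every constant C there exists a finite simple graph G with D(G) − ⌈S(G)/2⌉ ≥ C, where S is the sum index and D is the difference index. (E.g., the graphs K̂_n^{(k,k)} with n = binom(k,2) + 2k satisfy S(G) = Θ(k²) and D(G) ≥ ⌈S(G)/2⌉ + k/3 − 1.) -/
open SimpleGraph

/-- The sum index of a finite simple graph. -/
noncomputable def sumIndex {V : Type*} [Fintype V] (G : SimpleGraph V) : ℕ :=
  sInf {n | ∃ f : V → ℤ, Function.Injective f ∧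
    {s : ℤ | ∃ u v, G.Adj u v ∧ s = f u + f v}.ncard = n}

/-- The difference index of a finite simple graph. -/
noncomputable def diffIndex {V : Type*} [Fintype V] (G : SimpleGraph V) : ℕ :=
  sInf {n | ∃ f : V → ℤ, Function.Injective f ∧
    {s : ℤ | ∃ u v, G.Adj u v ∧ s = |f u - f v|}.ncard = n}

open Finset

lemma card_sub_card (A B : Finset ℤ) (hA : A.Nonempty) (hB : B.Nonempty) :
    A.card + B.card ≤ ((A ×ˢ B).image fun p : ℤ × ℤ => p.1 - p.2).card + 1 := by
  classical
  set aM := A.max' hA with haM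
  set bM := B.max' hB with hbM
  set S := (A ×ˢ B).image (fun p : ℤ × ℤ => p.1 - p.2) with hS
  set U := A.image (fun a => a - bM) with hU
  set W := B.image (fun b => aM - b) with hW
  have hUS : U ⊆ S := by
    intro v hv
    simp only [hU, Finset.mem_image] at hv
    obtain ⟨a, ha, rfl⟩ := hv
    exact Finset.mem_image.2 ⟨(a, bM), Finset.mem_product.2 ⟨ha, B.max'_mem hB⟩, rfl⟩
  have hWS : W ⊆ S := by
    intro v hv
    simp only [hW, Finset.mem_image] at hv
    obtain ⟨b, hb, rfl⟩ := hv
    exact Finset.mem_image.2 ⟨(aM, b), Finset.mem_product.2 ⟨A.max'_mem hA, hb⟩, rfl⟩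
  have hUcard : U.card = A.card := by
    apply Finset.card_image_of_injective
    intro x y h
    dsimp at h
    omega
  have hWcard : W.card = B.card := by
    apply Finset.card_image_of_injective
    intro x y h
    dsimp at h
    omega
  have hinter : U ∩ W ⊆ {aM - bM} := by
    intro v hv
    rw [Finset.mem_inter] at hv
    obtain ⟨hvU, hvW⟩ := hv
    simp only [hU, Finset.mem_image] at hvU
    simp only [hW, Finset.mem_image] at hvW
    obtain ⟨a, ha, rfl⟩ := hvU
    obtain ⟨b, hb, hab⟩ := hvW
    have h1 : a ≤ aM := A.le_max' a ha
    have h2 : b ≤ bM := B.le_max' b hb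
    have : a - bM = aM - bM := by omega
    simp [this]
  have hintercard : (U ∩ W).card ≤ 1 := le_trans (Finset.card_le_card hinter) (by simp)
  have hunion : (U ∪ W).card + (U ∩ W).card = U.card + W.card :=
    Finset.card_union_add_card_inter U W
  have hsub : (U ∪ W).card ≤ S.card := Finset.card_le_card (Finset.union_subset hUS hWS)
  omega

/-- Key additive lemma: the difference values of the complete tripartite graph K_{1,m,m}
(apex at 0) number at least (5m-4)/4. -/
lemma key_lemma (m : ℕ) (hm : 8 ≤ m) (X Y T : Finset ℤ)
    (hX : X.card = m + 1) (hY : Y.card = m) (hXY : Disjoint X Y) (h0 : (0:ℤ) ∈ X)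
    (habs : ∀ l ∈ X ∪ Y, l ≠ 0 → |l| ∈ T)
    (hcross : ∀ x ∈ X, ∀ y ∈ Y, |x - y| ∈ T) :
    5 * m ≤ 4 * T.card + 4 := by
  classical
  have h0Y : (0:ℤ) ∉ Y := fun h => (Finset.disjoint_left.1 hXY h0) h
  set A := X.filter (fun x => 0 ≤ x) with hA
  set B := X.filter (fun x => x < 0) with hB
  set C := Y.filter (fun y => 0 < y) with hC
  set D := Y.filter (fun y => y < 0) with hD
  set Xpos := X.filter (fun x => 0 < x) with hXpos
  have hAsub : A ⊆ X := Finset.filter_subset _ _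
  have hBsub : B ⊆ X := Finset.filter_subset _ _
  have hCsub : C ⊆ Y := Finset.filter_subset _ _
  have hDsub : D ⊆ Y := Finset.filter_subset _ _
  have hXpossub : Xpos ⊆ X := Finset.filter_subset _ _
  -- cardinalities
  have hab : A.card + B.card = m + 1 := by
    have key : B = X.filter (fun x => ¬ 0 ≤ x) := by
      rw [hB]; ext x; simp [not_le]
    rw [hA, key, Finset.card_filter_add_card_filter_not, hX]
  have hcd : C.card + D.card = m := by
    have keyD : D = Y.filter (fun y => ¬ 0 < y) := by
      rw [hD]; ext y
      simp only [Finset.mem_filter, not_lt]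
      constructor
      · exact fun ⟨h1, h2⟩ => ⟨h1, le_of_lt h2⟩
      · rintro ⟨h1, h2⟩
        exact ⟨h1, lt_of_le_of_ne h2 (fun h => h0Y (h ▸ h1))⟩
    rw [hC, keyD, Finset.card_filter_add_card_filter_not, hY]
  have hAXpos : A = insert 0 Xpos := by
    ext x
    simp only [hA, hXpos, Finset.mem_insert, Finset.mem_filter]
    constructor
    · rintro ⟨hx, hx0⟩
      rcases eq_or_lt_of_le hx0 with h | h
      · exact Or.inl h.symm
      · exact Or.inr ⟨hx, h⟩
    · rintro (rfl | ⟨hx, hx0⟩)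
      · exact ⟨h0, le_refl 0⟩
      · exact ⟨hx, le_of_lt hx0⟩
  have h0nXpos : (0:ℤ) ∉ Xpos := by simp [hXpos]
  have hAcard : A.card = Xpos.card + 1 := by
    rw [hAXpos, Finset.card_insert_of_notMem h0nXpos]
  -- the positive/negative label families
  set FP := (X ∪ Y).filter (fun l => 0 < l) with hFP
  set FN := ((X ∪ Y).filter (fun l => l < 0)).image (fun l => -l) with hFN
  have hXYfilter : ∀ p : ℤ → Prop, ∀ hp : DecidablePred p,
      ((X ∪ Y).filter p).card = (X.filter p).card + (Y.filter p).card := by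
    intro p hp
    rw [Finset.filter_union]
    apply Finset.card_union_of_disjoint
    exact Finset.disjoint_filter_filter hXY
  have hFPcard : FP.card = Xpos.card + C.card := by
    rw [hFP, hXYfilter]
  have hFNcard : FN.card = B.card + D.card := by
    rw [hFN]
    rw [Finset.card_image_of_injective _ neg_injective]
    rw [hXYfilter]
  have hFPT : FP ⊆ T := by
    intro l hl
    rw [hFP, Finset.mem_filter] at hl
    have := habs l hl.1 (by omega)
    rwa [abs_of_pos hl.2] at this
  have hFNT : FN ⊆ T := by
    intro v hv
    rw [hFN, Finset.mem_image] at hv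
    obtain ⟨l, hl, rfl⟩ := hv
    rw [Finset.mem_filter] at hl
    have := habs l hl.1 (by omega)
    rwa [abs_of_neg hl.2] at this
  -- the extremal label
  set L := (X ∪ Y).erase 0 with hL
  have hLne : L.Nonempty := by
    have hYne : Y.Nonempty := Finset.card_pos.1 (by omega)
    obtain ⟨y, hy⟩ := hYne
    exact ⟨y, Finset.mem_erase.2 ⟨fun h => h0Y (h ▸ hy), Finset.mem_union_right _ hy⟩⟩
  have hLabs : (L.image (fun l => |l|)).Nonempty := hLne.image _
  set M := (L.image (fun l => |l|)).max' hLabs with hM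
  obtain ⟨w, hwL, hwM⟩ : ∃ w ∈ L, |w| = M := by
    have := Finset.max'_mem _ hLabs
    rw [Finset.mem_image] at this
    obtain ⟨w, hw, hweq⟩ := this
    exact ⟨w, hw, hweq⟩
  have hMle : ∀ l ∈ X ∪ Y, l ≠ 0 → |l| ≤ M := by
    intro l hl hl0
    exact Finset.le_max' _ _ (Finset.mem_image_of_mem _ (Finset.mem_erase.2 ⟨hl0, hl⟩))
  have hFPle : ∀ v ∈ FP, v ≤ M := by
    intro v hv
    rw [hFP, Finset.mem_filter] at hv
    have := hMle v hv.1 (by omega)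
    rwa [abs_of_pos hv.2] at this
  have hFNle : ∀ v ∈ FN, v ≤ M := by
    intro v hv
    rw [hFN, Finset.mem_image] at hv
    obtain ⟨l, hl, rfl⟩ := hv
    rw [Finset.mem_filter] at hl
    have := hMle l hl.1 (by omega)
    rwa [abs_of_neg hl.2] at this
  -- auxiliary disjoint-union bound
  have haux : ∀ F G : Finset ℤ, F ⊆ T → G ⊆ T → (∀ v ∈ F, v ≤ M) → (∀ v ∈ G, M < v) →
      F.card + G.card ≤ T.card := by
    intro F G hF hG hFle hGgt
    have hdis : Disjoint F G := by
      rw [Finset.disjoint_left]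
      intro v hvF hvG
      exact absurd (hFle v hvF) (not_le.2 (hGgt v hvG))
    calc F.card + G.card = (F ∪ G).card := (Finset.card_union_of_disjoint hdis).symm
      _ ≤ T.card := Finset.card_le_card (Finset.union_subset hF hG)
  -- Case S1a : many (nonneg X) vs (neg Y) pairs
  by_cases hS1a : 5 * m ≤ 4 * (A.card + D.card)
  · have hAne : A.Nonempty := ⟨0, by rw [hA]; exact Finset.mem_filter.2 ⟨h0, le_refl 0⟩⟩
    have hAle : A.card ≤ m + 1 := hX ▸ Finset.card_le_card hAsub
    have hDne : D.Nonempty := Finset.card_pos.1 (by omega)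
    have himg := card_sub_card A D hAne hDne
    have hsubT : ((A ×ˢ D).image fun p : ℤ × ℤ => p.1 - p.2) ⊆ T := by
      intro v hv
      rw [Finset.mem_image] at hv
      obtain ⟨⟨x, y⟩, hxy, rfl⟩ := hv
      rw [Finset.mem_product] at hxy
      obtain ⟨hx, hy⟩ := hxy
      rw [hA, Finset.mem_filter] at hx
      rw [hD, Finset.mem_filter] at hy
      have := hcross x hx.1 y hy.1
      rwa [abs_of_pos (by omega : (0:ℤ) < x - y)] at this
    have hTc := Finset.card_le_card hsubT
    omega
  by_cases hS1b : 5 * m ≤ 4 * (C.card + B.card)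
  · have hCle : C.card ≤ m := hY ▸ Finset.card_le_card hCsub
    have hCne : C.Nonempty := Finset.card_pos.1 (by omega)
    have hBne : B.Nonempty := Finset.card_pos.1 (by omega)
    have himg := card_sub_card C B hCne hBne
    have hsubT : ((C ×ˢ B).image fun p : ℤ × ℤ => p.1 - p.2) ⊆ T := by
      intro v hv
      rw [Finset.mem_image] at hv
      obtain ⟨⟨y, x⟩, hxy, rfl⟩ := hv
      rw [Finset.mem_product] at hxy
      obtain ⟨hy, hx⟩ := hxy
      rw [hC, Finset.mem_filter] at hy
      rw [hB, Finset.mem_filter] at hx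
      have := hcross x hx.1 y hy.1
      rwa [abs_of_neg (by omega : x - y < 0), neg_sub] at this
    have hTc := Finset.card_le_card hsubT
    omega
  push_neg at hS1a hS1b
  have hwXY := Finset.mem_of_mem_erase hwL
  have hw0 : w ≠ 0 := (Finset.mem_erase.1 hwL).1
  have hFPTcard := Finset.card_le_card hFPT
  have hFNTcard := Finset.card_le_card hFNT
  rcases Finset.mem_union.1 hwXY with hwX | hwY
  · rcases lt_or_gt_of_ne hw0 with hwneg | hwpos
    · -- w ∈ X, w < 0 : gains from C
      set G := C.image (fun y => y - w) with hG
      have hGcard : G.card = C.card :=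
        Finset.card_image_of_injective _ (by intro a b h; dsimp at h; omega)
      have hGT : G ⊆ T := by
        intro v hv
        rw [hG, Finset.mem_image] at hv
        obtain ⟨y, hy, rfl⟩ := hv
        rw [hC, Finset.mem_filter] at hy
        have := hcross w hwX y hy.1
        rwa [abs_of_neg (by omega : w - y < 0), neg_sub] at this
      have hGgt : ∀ v ∈ G, M < v := by
        intro v hv
        rw [hG, Finset.mem_image] at hv
        obtain ⟨y, hy, rfl⟩ := hv
        rw [hC, Finset.mem_filter] at hy
        have hMw : M = -w := by rw [← hwM, abs_of_neg hwneg]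
        omega
      by_cases hbr : m ≤ 4 * C.card
      · have hu1 := haux FP G hFPT hGT hFPle hGgt
        have hu2 := haux FN G hFNT hGT hFNle hGgt
        omega
      · omega
    · -- w ∈ X, 0 < w : gains from D
      set G := D.image (fun y => w - y) with hG
      have hGcard : G.card = D.card :=
        Finset.card_image_of_injective _ (by intro a b h; dsimp at h; omega)
      have hGT : G ⊆ T := by
        intro v hv
        rw [hG, Finset.mem_image] at hv
        obtain ⟨y, hy, rfl⟩ := hv
        rw [hD, Finset.mem_filter] at hy
        have := hcross w hwX y hy.1
        rwa [abs_of_pos (by omega : (0:ℤ) < w - y)] at this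
      have hGgt : ∀ v ∈ G, M < v := by
        intro v hv
        rw [hG, Finset.mem_image] at hv
        obtain ⟨y, hy, rfl⟩ := hv
        rw [hD, Finset.mem_filter] at hy
        have hMw : M = w := by rw [← hwM, abs_of_pos hwpos]
        omega
      by_cases hbr : m ≤ 4 * D.card
      · have hu1 := haux FP G hFPT hGT hFPle hGgt
        have hu2 := haux FN G hFNT hGT hFNle hGgt
        omega
      · omega
  · rcases lt_or_gt_of_ne hw0 with hwneg | hwpos
    · -- w ∈ Y, w < 0 : gains from Xpos
      set G := Xpos.image (fun x => x - w) with hG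
      have hGcard : G.card = Xpos.card :=
        Finset.card_image_of_injective _ (by intro a b h; dsimp at h; omega)
      have hGT : G ⊆ T := by
        intro v hv
        rw [hG, Finset.mem_image] at hv
        obtain ⟨x, hx, rfl⟩ := hv
        rw [hXpos, Finset.mem_filter] at hx
        have := hcross x hx.1 w hwY
        rwa [abs_of_pos (by omega : (0:ℤ) < x - w)] at this
      have hGgt : ∀ v ∈ G, M < v := by
        intro v hv
        rw [hG, Finset.mem_image] at hv
        obtain ⟨x, hx, rfl⟩ := hv
        rw [hXpos, Finset.mem_filter] at hx
        have hMw : M = -w := by rw [← hwM, abs_of_neg hwneg]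
        omega
      by_cases hbr : m ≤ 4 * Xpos.card
      · have hu1 := haux FP G hFPT hGT hFPle hGgt
        have hu2 := haux FN G hFNT hGT hFNle hGgt
        omega
      · omega
    · -- w ∈ Y, 0 < w : gains from B
      set G := B.image (fun x => w - x) with hG
      have hGcard : G.card = B.card :=
        Finset.card_image_of_injective _ (by intro a b h; dsimp at h; omega)
      have hGT : G ⊆ T := by
        intro v hv
        rw [hG, Finset.mem_image] at hv
        obtain ⟨x, hx, rfl⟩ := hv
        rw [hB, Finset.mem_filter] at hx
        have := hcross x hx.1 w hwY
        rwa [abs_of_neg (by omega : x - w < 0), neg_sub] at this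
      have hGgt : ∀ v ∈ G, M < v := by
        intro v hv
        rw [hG, Finset.mem_image] at hv
        obtain ⟨x, hx, rfl⟩ := hv
        rw [hB, Finset.mem_filter] at hx
        have hMw : M = w := by rw [← hwM, abs_of_pos hwpos]
        omega
      by_cases hbr : m ≤ 4 * B.card
      · have hu1 := haux FP G hFPT hGT hFPle hGgt
        have hu2 := haux FN G hFNT hGT hFNle hGgt
        omega
      · omega

abbrev Vt (m : ℕ) := Option (Fin m ⊕ Fin m)

def tripartite (m : ℕ) : SimpleGraph (Vt m) where
  Adj u v := u ≠ v ∧ (u = none ∨ v = none ∨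
    (∃ i j, u = some (Sum.inl i) ∧ v = some (Sum.inr j)) ∨
    (∃ i j, u = some (Sum.inr i) ∧ v = some (Sum.inl j)))
  symm := by
    constructor
    rintro u v ⟨h1, h2⟩
    refine ⟨Ne.symm h1, ?_⟩
    rcases h2 with rfl | rfl | ⟨i, j, hu, hv⟩ | ⟨i, j, hu, hv⟩
    · exact Or.inr (Or.inl rfl)
    · exact Or.inl rfl
    · exact Or.inr (Or.inr (Or.inr ⟨j, i, hv, hu⟩))
    · exact Or.inr (Or.inr (Or.inl ⟨j, i, hv, hu⟩))
  loopless := by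
    constructor
    rintro u ⟨h1, -⟩
    exact h1 rfl

def f0 (m : ℕ) : Vt m → ℤ
  | none => m
  | some (Sum.inl i) => i
  | some (Sum.inr j) => m + 1 + j

lemma f0_inj (m : ℕ) : Function.Injective (f0 m) := by
  intro a b h
  have hb : ∀ i : Fin m, (i : ℤ) < m := fun i => by exact_mod_cast i.is_lt
  rcases a with _ | (i | i) <;> rcases b with _ | (j | j)
  · rfl
  · simp only [f0] at h; have := hb j; omega
  · simp only [f0] at h; have := hb j; omega
  · simp only [f0] at h; have := hb i; omega
  · simp only [f0] at h
    have : i = j := Fin.ext (by exact_mod_cast h)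
    rw [this]
  · simp only [f0] at h; have := hb i; have := hb j; omega
  · simp only [f0] at h; have := hb i; omega
  · simp only [f0] at h; have := hb i; have := hb j; omega
  · simp only [f0] at h
    have : i = j := Fin.ext (by exact_mod_cast (by omega : (i:ℤ) = j))
    rw [this]

lemma sum_set_eq (m : ℕ) (hm : 1 ≤ m) :
    {s : ℤ | ∃ u v, (tripartite m).Adj u v ∧ s = f0 m u + f0 m v} =
      ↑(Finset.Icc (m : ℤ) (3 * m)) := by
  have hb : ∀ i : Fin m, (i : ℤ) < m := fun i => by exact_mod_cast i.is_lt
  ext s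
  simp only [Set.mem_setOf_eq, Finset.coe_Icc, Set.mem_Icc]
  constructor
  · rintro ⟨u, v, ⟨hne, hsh⟩, rfl⟩
    rcases hsh with rfl | rfl | ⟨i, j, rfl, rfl⟩ | ⟨i, j, rfl, rfl⟩
    · rcases v with _ | (j | j)
      · exact absurd rfl hne
      · simp only [f0]; have := hb j; have : (0:ℤ) ≤ j := by positivity
        constructor <;> omega
      · simp only [f0]; have := hb j; have : (0:ℤ) ≤ j := by positivity
        constructor <;> omega
    · rcases u with _ | (i | i)
      · exact absurd rfl hne
      · simp only [f0]; have := hb i; have : (0:ℤ) ≤ i := by positivity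
        constructor <;> omega
      · simp only [f0]; have := hb i; have : (0:ℤ) ≤ i := by positivity
        constructor <;> omega
    · simp only [f0]
      have := hb i; have := hb j
      have : (0:ℤ) ≤ i := by positivity
      have : (0:ℤ) ≤ j := by positivity
      constructor <;> omega
    · simp only [f0]
      have := hb i; have := hb j
      have : (0:ℤ) ≤ i := by positivity
      have : (0:ℤ) ≤ j := by positivity
      constructor <;> omega
  · rintro ⟨hs1, hs2⟩
    by_cases h1 : s ≤ 2 * m - 1
    · -- s = m + (s - m) with s - m ∈ [0, m-1]
      refine ⟨none, some (Sum.inl ⟨(s - m).toNat, by omega⟩), ⟨by simp, Or.inl rfl⟩, ?_⟩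
      simp only [f0]
      omega
    · by_cases h2 : s = 2 * m
      · refine ⟨some (Sum.inl ⟨m - 1, by omega⟩),
          some (Sum.inr ⟨0, by omega⟩), ⟨by simp, Or.inr (Or.inr (Or.inl ⟨_, _, rfl, rfl⟩))⟩, ?_⟩
        simp only [f0]
        push_cast
        omega
      · refine ⟨none, some (Sum.inr ⟨(s - 2 * m - 1).toNat, by omega⟩), ⟨by simp, Or.inl rfl⟩, ?_⟩
        simp only [f0]
        omega

lemma diff_lower (m : ℕ) (hm : 8 ≤ m) (f : Vt m → ℤ) (hf : Function.Injective f) :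
    5 * m ≤ 4 * {s : ℤ | ∃ u v, (tripartite m).Adj u v ∧ s = |f u - f v|}.ncard + 4 := by
  classical
  set g : Vt m → ℤ := fun v => f v - f none with hg
  have hginj : Function.Injective g := by
    intro a b h
    apply hf
    simp only [hg] at h
    omega
  set T : Finset ℤ := (Finset.univ.filter
      (fun p : Vt m × Vt m => (tripartite m).Adj p.1 p.2)).image
      (fun p => |f p.1 - f p.2|) with hT
  have hset : {s : ℤ | ∃ u v, (tripartite m).Adj u v ∧ s = |f u - f v|} = ↑T := by
    ext s
    simp only [hT, Set.mem_setOf_eq, Finset.coe_image, Set.mem_image, Finset.mem_coe,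
      Finset.mem_filter, Finset.mem_univ, true_and]
    constructor
    · rintro ⟨u, v, h, rfl⟩; exact ⟨(u, v), h, rfl⟩
    · rintro ⟨⟨u, v⟩, h, rfl⟩; exact ⟨u, v, h, rfl⟩
  rw [hset, Set.ncard_coe_finset]
  have hmemT : ∀ u v : Vt m, (tripartite m).Adj u v → |g u - g v| ∈ T := by
    intro u v h
    have : |g u - g v| = |f u - f v| := by simp only [hg]; ring_nf
    rw [this, hT]
    exact Finset.mem_image.2 ⟨(u, v), Finset.mem_filter.2 ⟨Finset.mem_univ _, h⟩, rfl⟩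
  have hIinj : Function.Injective (fun i : Fin m => g (some (Sum.inl i))) := by
    intro i j h
    have := hginj h
    simpa using this
  have hJinj : Function.Injective (fun j : Fin m => g (some (Sum.inr j))) := by
    intro i j h
    have := hginj h
    simpa using this
  set X : Finset ℤ := insert 0 (Finset.univ.image (fun i : Fin m => g (some (Sum.inl i)))) with hX
  set Y : Finset ℤ := Finset.univ.image (fun j : Fin m => g (some (Sum.inr j))) with hY
  have hg0 : g none = 0 := by simp [hg]
  have h0X : (0:ℤ) ∈ X := Finset.mem_insert_self _ _
  have h0img : (0:ℤ) ∉ Finset.univ.image (fun i : Fin m => g (some (Sum.inl i))) := by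
    rw [Finset.mem_image]
    rintro ⟨i, -, hi⟩
    have : g (some (Sum.inl i)) = g none := by rw [hg0, hi]
    exact absurd (hginj this) (by simp)
  have hXcard : X.card = m + 1 := by
    rw [hX, Finset.card_insert_of_notMem h0img, Finset.card_image_of_injective _ hIinj,
      Finset.card_univ, Fintype.card_fin]
  have hYcard : Y.card = m := by
    rw [hY, Finset.card_image_of_injective _ hJinj, Finset.card_univ, Fintype.card_fin]
  have hXY : Disjoint X Y := by
    rw [Finset.disjoint_left]
    intro s hsX hsY
    rw [hY, Finset.mem_image] at hsY
    obtain ⟨j, -, hj⟩ := hsY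
    rw [hX, Finset.mem_insert] at hsX
    rcases hsX with rfl | hsX
    · have : g (some (Sum.inr j)) = g none := by rw [hg0, hj]
      exact absurd (hginj this) (by simp)
    · rw [Finset.mem_image] at hsX
      obtain ⟨i, -, hi⟩ := hsX
      have : g (some (Sum.inl i)) = g (some (Sum.inr j)) := by rw [hi, hj]
      have := hginj this
      simp at this
  apply key_lemma m hm X Y T hXcard hYcard hXY h0X
  · -- habs
    intro l hl hl0
    rw [Finset.mem_union] at hl
    have : ∃ w : Fin m ⊕ Fin m, l = g (some w) := by
      rcases hl with hl | hl
      · rw [hX, Finset.mem_insert] at hl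
        rcases hl with rfl | hl
        · exact absurd rfl hl0
        · obtain ⟨i, -, hi⟩ := Finset.mem_image.1 hl
          exact ⟨Sum.inl i, hi.symm⟩
      · obtain ⟨j, -, hj⟩ := Finset.mem_image.1 hl
        exact ⟨Sum.inr j, hj.symm⟩
    obtain ⟨w, rfl⟩ := this
    have hadj : (tripartite m).Adj (some w) none := ⟨by simp, Or.inr (Or.inl rfl)⟩
    have := hmemT _ _ hadj
    rwa [hg0, sub_zero] at this
  · -- hcross
    intro x hx y hy
    obtain ⟨j, -, hj⟩ := Finset.mem_image.1 hy
    rw [hX, Finset.mem_insert] at hx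
    rcases hx with rfl | hx
    · have hadj : (tripartite m).Adj none (some (Sum.inr j)) := ⟨by simp, Or.inl rfl⟩
      have := hmemT _ _ hadj
      rwa [hg0, hj] at this
    · obtain ⟨i, -, hi⟩ := Finset.mem_image.1 hx
      have hadj : (tripartite m).Adj (some (Sum.inl i)) (some (Sum.inr j)) :=
        ⟨by simp, Or.inr (Or.inr (Or.inl ⟨i, j, rfl, rfl⟩))⟩
      have := hmemT _ _ hadj
      rwa [hi, hj] at this

/-- For every constant `C` there is a finite simple graph `G` with
`D(G) - ⌈S(G)/2⌉ ≥ C` (ceiling division on `ℕ`). -/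
theorem stmt14 (C : ℕ) :
    ∃ (V : Type) (_ : Fintype V) (G : SimpleGraph V),
      (sumIndex G + 1) / 2 + C ≤ diffIndex G := by
  classical
  set m := 4 * C + 8 with hm
  refine ⟨Vt m, inferInstance, tripartite m, ?_⟩
  -- upper bound on sumIndex
  have hsumval : {s : ℤ | ∃ u v, (tripartite m).Adj u v ∧ s = f0 m u + f0 m v}.ncard
      = 2 * m + 1 := by
    rw [sum_set_eq m (by omega), Set.ncard_coe_finset, Int.card_Icc]
    omega
  have hsum : sumIndex (tripartite m) ≤ 2 * m + 1 :=
    Nat.sInf_le ⟨f0 m, f0_inj m, hsumval⟩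
  -- lower bound on diffIndex
  have hdiff : 5 * C + 9 ≤ diffIndex (tripartite m) := by
    apply le_csInf
    · exact ⟨{s : ℤ | ∃ u v, (tripartite m).Adj u v ∧ s = |f0 m u - f0 m v|}.ncard,
        f0 m, f0_inj m, rfl⟩
    · rintro n ⟨f, hf, rfl⟩
      have := diff_lower m (by omega) f hf
      omega
  have h2 : (sumIndex (tripartite m) + 1) / 2 ≤ (2 * m + 2) / 2 :=
    Nat.div_le_div_right (by omega)
  omega
end

section
/- A graph G admits an exclusive sum labelling with r isolated vertices if and only if G is isomorphic to G₊(S,T) for some finite sets S, T of positive integers with |T| = r, where the disjointness of S and T may be dropped: for any finite sets S, T of positive integers there exists an integer shift making them disjoint without changing the isomorphism type, since G₊(S,T) ≅ G₊(S + {r}, T + {2r}) for every positive integer r. -/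
open SimpleGraph

/-- `G₊(S,T)`: the graph on vertex set `S` in which distinct `s, s'` are adjacent iff
`s + s' ∈ T`. -/
def GPlus (S T : Finset ℕ) : SimpleGraph {x // x ∈ S} :=
  SimpleGraph.fromRel (fun a b => (a : ℕ) + (b : ℕ) ∈ T)

/-- `G ∪ K̄_r`: the disjoint union of `G` with `r` isolated vertices. -/
def addIsolated {V : Type*} (G : SimpleGraph V) (r : ℕ) : SimpleGraph (V ⊕ Fin r) :=
  SimpleGraph.fromRel (fun a b =>
    match a, b with
    | Sum.inl u, Sum.inl v => G.Adj u v
    | _, _ => False)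

/-- `f` is an exclusive sum labelling of `G` with `r` added isolated vertices:
an injective positive integer labelling of `G ∪ K̄_r` such that distinct vertices are
adjacent iff the sum of their labels is a label, and no vertex of `G` is a working
vertex. -/
def IsExclusiveSumLabelling {V : Type*} (G : SimpleGraph V) (r : ℕ)
    (f : V ⊕ Fin r → ℕ) : Prop :=
  Function.Injective f ∧ (∀ x, 0 < f x) ∧
  (∀ a b, a ≠ b → ((addIsolated G r).Adj a b ↔ ∃ c, f c = f a + f b)) ∧
  (∀ u v : V, G.Adj u v → ∀ c, f c = f (Sum.inl u) + f (Sum.inl v) → ∃ i, c = Sum.inr i)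

lemma addIsolated_adj_inl {V : Type*} (G : SimpleGraph V) (r : ℕ) (u v : V) :
    (addIsolated G r).Adj (Sum.inl u) (Sum.inl v) ↔ G.Adj u v := by
  simp only [addIsolated, fromRel_adj, ne_eq, Sum.inl.injEq]
  constructor
  · rintro ⟨h, h' | h'⟩
    · exact h'
    · exact h'.symm
  · intro h
    exact ⟨G.ne_of_adj h, Or.inl h⟩

lemma addIsolated_not_adj_inr {V : Type*} (G : SimpleGraph V) (r : ℕ) (a : V ⊕ Fin r)
    (i : Fin r) : ¬ (addIsolated G r).Adj a (Sum.inr i) := by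
  simp only [addIsolated, fromRel_adj, ne_eq, not_and, not_or]
  intro _
  cases a <;> simp

/-- `G` admits an exclusive sum labelling with `r` isolated vertices iff
`G ≅ G₊(S,T)` for some finite sets `S, T` of positive integers with `|T| = r`
(disjointness of `S` and `T` may be dropped); moreover
`G₊(S,T) ≅ G₊(S + {m}, T + {2m})` for every positive integer `m`. -/
theorem stmt16 {V : Type*} [Fintype V] (G : SimpleGraph V) (r : ℕ) :
    ((∃ f : V ⊕ Fin r → ℕ, IsExclusiveSumLabelling G r f) ↔
      ∃ S T : Finset ℕ, (∀ x ∈ S, 0 < x) ∧ (∀ x ∈ T, 0 < x) ∧ T.card = r ∧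
        Nonempty (G ≃g GPlus S T)) ∧
    (∀ (S T : Finset ℕ) (m : ℕ), 0 < m →
      Nonempty (GPlus S T ≃g GPlus (S.image (· + m)) (T.image (· + 2 * m)))) := by
  constructor
  · constructor
    · -- labelling → sets
      rintro ⟨f, hinj, hpos, hadj, hexc⟩
      set S : Finset ℕ := Finset.univ.image (fun v : V => f (Sum.inl v)) with hSdef
      set T : Finset ℕ := Finset.univ.image (fun i : Fin r => f (Sum.inr i)) with hTdef
      have hmemS : ∀ v : V, f (Sum.inl v) ∈ S := fun v => by
        simp [hSdef]
      have hmemT : ∀ i : Fin r, f (Sum.inr i) ∈ T := fun i => by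
        simp [hTdef]
      refine ⟨S, T, ?_, ?_, ?_, ?_⟩
      · intro x hx
        simp only [hSdef, Finset.mem_image] at hx
        obtain ⟨v, -, rfl⟩ := hx
        exact hpos _
      · intro x hx
        simp only [hTdef, Finset.mem_image] at hx
        obtain ⟨i, -, rfl⟩ := hx
        exact hpos _
      · rw [hTdef, Finset.card_image_of_injective _
          (fun i j h => Sum.inr_injective (hinj h))]
        simp
      · -- the isomorphism
        have hbij : Function.Bijective
            (fun v : V => (⟨f (Sum.inl v), hmemS v⟩ : {x // x ∈ S})) := by
          constructor
          · intro u v h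
            exact Sum.inl_injective (hinj (congrArg Subtype.val h))
          · rintro ⟨x, hx⟩
            simp only [hSdef, Finset.mem_image] at hx
            obtain ⟨v, -, rfl⟩ := hx
            exact ⟨v, rfl⟩
        refine ⟨⟨Equiv.ofBijective _ hbij, ?_⟩⟩
        intro u v
        simp only [Equiv.ofBijective_apply, GPlus, fromRel_adj, ne_eq, Subtype.mk.injEq]
        constructor
        · rintro ⟨hne, h | h⟩
          · -- f(inl u) + f(inl v) ∈ T, so exists c with label the sum, so adjacent
            have huv : (Sum.inl u : V ⊕ Fin r) ≠ Sum.inl v := by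
              intro h'; exact hne (congrArg f h')
            simp only [hTdef, Finset.mem_image] at h
            obtain ⟨i, -, hi⟩ := h
            have := (hadj _ _ huv).mpr ⟨Sum.inr i, hi⟩
            exact (addIsolated_adj_inl G r u v).mp this
          · have huv : (Sum.inl u : V ⊕ Fin r) ≠ Sum.inl v := by
              intro h'; exact hne (congrArg f h')
            simp only [hTdef, Finset.mem_image] at h
            obtain ⟨i, -, hi⟩ := h
            rw [add_comm] at hi
            have := (hadj _ _ huv).mpr ⟨Sum.inr i, hi⟩
            exact (addIsolated_adj_inl G r u v).mp this
        · intro h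
          have huv : (Sum.inl u : V ⊕ Fin r) ≠ Sum.inl v := by
            intro h'
            exact G.ne_of_adj h (Sum.inl_injective h')
          obtain ⟨c, hc⟩ := (hadj _ _ huv).mp ((addIsolated_adj_inl G r u v).mpr h)
          obtain ⟨i, rfl⟩ := hexc u v h c hc
          refine ⟨fun h' => huv (hinj h'), Or.inl ?_⟩
          rw [← hc]; exact hmemT i
    · -- sets → labelling
      rintro ⟨S, T, hS, hT, hTcard, ⟨e⟩⟩
      set m : ℕ := S.sup id + T.sup id + 1 with hm
      set g : Fin r ≃ {x // x ∈ T} := (finCongr hTcard.symm).trans T.equivFin.symm with hg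
      have heB : ∀ v : V, 1 ≤ ((e v : {x // x ∈ S}) : ℕ) ∧ ((e v : {x // x ∈ S}) : ℕ) ≤ S.sup id :=
        fun v => ⟨hS _ (e v).2, Finset.le_sup (f := id) (e v).2⟩
      have hgB : ∀ i : Fin r, 1 ≤ ((g i : {x // x ∈ T}) : ℕ) ∧ ((g i : {x // x ∈ T}) : ℕ) ≤ T.sup id :=
        fun i => ⟨hT _ (g i).2, Finset.le_sup (f := id) (g i).2⟩
      have hgsurj : ∀ t ∈ T, ∃ i : Fin r, ((g i : {x // x ∈ T}) : ℕ) = t := by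
        intro t ht
        exact ⟨g.symm ⟨t, ht⟩, by simp⟩
      refine ⟨Sum.elim (fun v => ((e v : {x // x ∈ S}) : ℕ) + m)
        (fun i => ((g i : {x // x ∈ T}) : ℕ) + 2 * m), ?_, ?_, ?_, ?_⟩
      · -- injective
        rintro (u | i) (v | j) h <;> simp only [Sum.elim_inl, Sum.elim_inr] at h
        · have : e u = e v := Subtype.ext (by omega)
          exact congrArg Sum.inl (e.toEquiv.injective this)
        · exact absurd h (by have := heB u; have := hgB j; omega)
        · exact absurd h (by have := heB v; have := hgB i; omega)
        · have : g i = g j := Subtype.ext (by omega)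
          rw [g.apply_eq_iff_eq] at this
          exact congrArg Sum.inr this
      · rintro (v | i) <;> simp <;> omega
      · -- adjacency iff sum is a label
        have key : ∀ u v : V, u ≠ v →
            (G.Adj u v ↔ ((e u : {x // x ∈ S}) : ℕ) + ((e v : {x // x ∈ S}) : ℕ) ∈ T) := by
          intro u v huv
          rw [← e.map_rel_iff]
          simp only [GPlus, fromRel_adj, ne_eq]
          constructor
          · rintro ⟨-, h | h⟩
            · exact h
            · rwa [add_comm]
          · intro h
            have : e u ≠ e v := fun h' => huv (e.toEquiv.injective h')
            exact ⟨this, Or.inl h⟩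
        rintro (u | i) (v | j) hne
        · have huv : u ≠ v := fun h => hne (congrArg Sum.inl h)
          rw [addIsolated_adj_inl, key u v huv]
          simp only [Sum.elim_inl]
          constructor
          · intro ht
            obtain ⟨i, hi⟩ := hgsurj _ ht
            exact ⟨Sum.inr i, by simp [hi]; ring⟩
          · rintro ⟨(w | i), hc⟩ <;> simp only [Sum.elim_inl, Sum.elim_inr] at hc
            · exact absurd hc (by have := heB w; have := heB u; have := heB v; omega)
            · have : ((g i : {x // x ∈ T}) : ℕ) = ((e u : {x // x ∈ S}) : ℕ) + ((e v : {x // x ∈ S}) : ℕ) := by omega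
              rw [← this]; exact (g i).2
        · constructor
          · intro h; exact absurd h (addIsolated_not_adj_inr G r _ j)
          · rintro ⟨(w | k), hc⟩ <;> simp only [Sum.elim_inl, Sum.elim_inr] at hc
            · exact absurd hc (by have := heB w; have := heB u; have := hgB j; omega)
            · exact absurd hc (by have := hgB k; have := heB u; have := hgB j; omega)
        · constructor
          · intro h
            exact absurd h.symm (addIsolated_not_adj_inr G r _ i)
          · rintro ⟨(w | k), hc⟩ <;> simp only [Sum.elim_inl, Sum.elim_inr] at hc
            · exact absurd hc (by have := heB w; have := heB v; have := hgB i; omega)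
            · exact absurd hc (by have := hgB k; have := heB v; have := hgB i; omega)
        · constructor
          · intro h; exact absurd h (addIsolated_not_adj_inr G r _ j)
          · rintro ⟨(w | k), hc⟩ <;> simp only [Sum.elim_inl, Sum.elim_inr] at hc
            · exact absurd hc (by have := heB w; have := hgB i; have := hgB j; omega)
            · exact absurd hc (by have := hgB k; have := hgB i; have := hgB j; omega)
      · -- exclusivity
        intro u v _ c hc
        rcases c with w | i
        · simp only [Sum.elim_inl] at hc
          exact absurd hc (by have := heB w; have := heB u; have := heB v; omega)
        · exact ⟨i, rfl⟩
  · -- shift isomorphism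
    intro S T m hm
    have hbij : Function.Bijective (fun x : {x // x ∈ S} =>
        (⟨(x : ℕ) + m, Finset.mem_image_of_mem _ x.2⟩ : {y // y ∈ S.image (· + m)})) := by
      constructor
      · intro a b h
        exact Subtype.ext (by have := congrArg Subtype.val h; simpa using this)
      · rintro ⟨y, hy⟩
        simp only [Finset.mem_image] at hy
        obtain ⟨x, hx, rfl⟩ := hy
        exact ⟨⟨x, hx⟩, rfl⟩
    refine ⟨⟨Equiv.ofBijective _ hbij, ?_⟩⟩
    intro a b
    simp only [Equiv.ofBijective_apply, GPlus, fromRel_adj, ne_eq, Subtype.mk.injEq]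
    have hmem : ∀ n : ℕ, n + 2 * m ∈ T.image (· + 2 * m) ↔ n ∈ T := by
      intro n
      simp only [Finset.mem_image]
      constructor
      · rintro ⟨t, ht, h⟩
        have : t = n := by omega
        rwa [← this]
      · intro h; exact ⟨n, h, rfl⟩
    have h1 : (a : ℕ) + m + ((b : ℕ) + m) = (a : ℕ) + (b : ℕ) + 2 * m := by ring
    have h2 : (b : ℕ) + m + ((a : ℕ) + m) = (b : ℕ) + (a : ℕ) + 2 * m := by ring
    rw [h1, h2, hmem, hmem]
    constructor
    · rintro ⟨hne, h⟩
      exact ⟨fun h' => hne (by rw [h']), h⟩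
    · rintro ⟨hne, h⟩
      exact ⟨fun h' => hne (Subtype.ext (by omega)), h⟩
end
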